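/- Let ℓ ≥ 2 be a fixed integer and let 𝐦 be a fixed vector of non-negative integers indexed by the unordered pairs of distinct elements of [ℓ]. Then there exists a constant C > 0 (depending only on ℓ and 𝐦) such that for every integer n ≥ 2 the following holds: if 𝓕_1, …, 𝓕_ℓ ⊆ 2^{[n]} is an extremal collection of (nonempty) families with the 𝐦-overlapping property, then there is a set I ⊆ [n] with |I| ≤ C · log₂ n such that for every x ∈ [n] \ I there exists k ∈ [ℓ] with d_k(x) ≥ 1/3. -/

import Mathlib

/-- Families `𝓕 1, …, 𝓕 ℓ` of subsets of `[n]` satisfy the `m`-overlapping property: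
for distinct `k₁ k₂` and sets `F₁ ∈ 𝓕 k₁`, `F₂ ∈ 𝓕 k₂` we have `|F₁ ∩ F₂| ≤ m k₁ k₂`.
The vector `m` indexed by unordered pairs is encoded as a symmetric function. -/
def MOverlap (n ℓ : ℕ) (m : Fin ℓ → Fin ℓ → ℕ) (𝓕 : Fin ℓ → Finset (Finset (Fin n))) : Prop :=
  ∀ k₁ k₂ : Fin ℓ, k₁ ≠ k₂ → ∀ F₁ ∈ 𝓕 k₁, ∀ F₂ ∈ 𝓕 k₂, (F₁ ∩ F₂).card ≤ m k₁ k₂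

/-- `s*(n, ℓ, m)`: the maximum of `|𝓕 1|⋯|𝓕 ℓ|` over collections of families of subsets
of `[n]` with the `m`-overlapping property. -/
noncomputable def sStar (n ℓ : ℕ) (m : Fin ℓ → Fin ℓ → ℕ) : ℕ :=
  open Classical in
  Finset.univ.sup (fun 𝓕 : Fin ℓ → Finset (Finset (Fin n)) =>
    if MOverlap n ℓ m 𝓕 then ∏ k, (𝓕 k).card else 0)

/-- The unordered pairs of distinct elements of `K`, represented as ordered pairs `(i, j)`
with `i < j`. -/
def pairsOf {ℓ : ℕ} (K : Finset (Fin ℓ)) : Finset (Fin ℓ × Fin ℓ) :=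
  K.offDiag.filter (fun p => p.1 < p.2)

/-- The normalized degree `d(F, 𝓕) = |{G ∈ 𝓕 : F ⊆ G}| / |𝓕|` of a set `F` in a family
`𝓕` of subsets of `[n]`. -/
noncomputable def ndeg {n : ℕ} (𝓕 : Finset (Finset (Fin n))) (F : Finset (Fin n)) : ℝ :=
  ((𝓕.filter (fun G => F ⊆ G)).card : ℝ) / (𝓕.card : ℝ)


set_option maxHeartbeats 1000000

theorem countL {n ℓ : ℕ} (m : Fin ℓ → Fin ℓ → ℕ) (𝓕 : Fin ℓ → Finset (Finset (Fin n)))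
    (hov : MOverlap n ℓ m 𝓕) {i j : Fin ℓ} (hij : i ≠ j) :
    ∑ x : Fin n, ((𝓕 i).filter (fun F => x ∈ F)).card * ((𝓕 j).filter (fun F => x ∈ F)).card
      ≤ m i j * ((𝓕 i).card * (𝓕 j).card) := by
  have key : ∑ x : Fin n, ((𝓕 i).filter (fun F => x ∈ F)).card * ((𝓕 j).filter (fun F => x ∈ F)).card
      = ∑ F ∈ 𝓕 i, ∑ G ∈ 𝓕 j, (F ∩ G).card := by
    have h1 : ∀ x : Fin n,
        ((𝓕 i).filter (fun F => x ∈ F)).card * ((𝓕 j).filter (fun F => x ∈ F)).card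
        = ∑ F ∈ 𝓕 i, ∑ G ∈ 𝓕 j, (if x ∈ F then 1 else 0) * (if x ∈ G then 1 else 0) := by
      intro x
      rw [Finset.card_filter, Finset.card_filter, Finset.sum_mul_sum]
    simp only [h1]
    rw [Finset.sum_comm]
    refine Finset.sum_congr rfl fun F _ => ?_
    rw [Finset.sum_comm]
    refine Finset.sum_congr rfl fun G _ => ?_
    simp [← ite_and, ← Finset.mem_inter, Finset.inter_comm]
  rw [key]
  calc ∑ F ∈ 𝓕 i, ∑ G ∈ 𝓕 j, (F ∩ G).card
      ≤ ∑ F ∈ 𝓕 i, ∑ G ∈ 𝓕 j, m i j := by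
        refine Finset.sum_le_sum fun F hF => Finset.sum_le_sum fun G hG => ?_
        exact hov i j hij F hF G hG
    _ = m i j * ((𝓕 i).card * (𝓕 j).card) := by
        simp [Finset.sum_const]; ring

theorem doubling {n ℓ : ℕ} (m : Fin ℓ → Fin ℓ → ℕ) (𝓕 : Fin ℓ → Finset (Finset (Fin n)))
    (hov : MOverlap n ℓ m 𝓕) (x : Fin n) (k0 : Fin ℓ) :
    2 * ∏ k, ((𝓕 k).filter (fun F => x ∉ F)).card ≤ sStar n ℓ m := by
  classical
  set B : Fin ℓ → Finset (Finset (Fin n)) := fun k => (𝓕 k).filter (fun F => x ∉ F) with hB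
  set 𝓖 : Fin ℓ → Finset (Finset (Fin n)) :=
    fun k => if k = k0 then B k0 ∪ (B k0).image (insert x) else B k with h𝓖
  have hBsub : ∀ k, B k ⊆ 𝓕 k := fun k => Finset.filter_subset _ _
  have hBx : ∀ k, ∀ F ∈ B k, x ∉ F := by
    intro k F hF; exact (Finset.mem_filter.mp hF).2
  -- membership in 𝓖 k: either F ∈ B k (if k ≠ k0) or F ∈ B k0 or F = insert x F' for F' ∈ B k0
  have hmem : ∀ k, ∀ F ∈ 𝓖 k, (F ∈ 𝓕 k ∧ x ∉ F) ∨ (k = k0 ∧ ∃ F' ∈ B k, F = insert x F') := by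
    intro k F hF
    by_cases hk : k = k0
    · rw [h𝓖] at hF
      simp only [if_pos hk, Finset.mem_union, Finset.mem_image] at hF
      rw [hk]
      rcases hF with h | ⟨F', hF', rfl⟩
      · exact Or.inl ⟨hk ▸ hBsub k0 h, hBx k0 _ h⟩
      · exact Or.inr ⟨rfl, F', hF', rfl⟩
    · simp only [h𝓖, if_neg hk] at hF
      exact Or.inl ⟨hBsub k hF, hBx k _ hF⟩
  have hov' : MOverlap n ℓ m 𝓖 := by
    intro k₁ k₂ hne F₁ hF₁ F₂ hF₂
    rcases hmem k₁ F₁ hF₁ with ⟨h1, hx1⟩ | ⟨hk1, F₁', hF₁', rfl⟩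
    · rcases hmem k₂ F₂ hF₂ with ⟨h2, hx2⟩ | ⟨hk2, F₂', hF₂', rfl⟩
      · exact hov k₁ k₂ hne F₁ h1 F₂ h2
      · rw [Finset.inter_comm, Finset.insert_inter_of_notMem hx1, Finset.inter_comm]
        exact hov k₁ k₂ hne F₁ h1 F₂' (hBsub _ hF₂')
    · rcases hmem k₂ F₂ hF₂ with ⟨h2, hx2⟩ | ⟨hk2, F₂', hF₂', rfl⟩
      · rw [Finset.insert_inter_of_notMem hx2]
        exact hov k₁ k₂ hne F₁' (hBsub _ hF₁') F₂ h2
      · exact absurd (hk1.trans hk2.symm) hne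
  have hcard : ∏ k, (𝓖 k).card = 2 * ∏ k, (B k).card := by
    have hk0 : (𝓖 k0).card = 2 * (B k0).card := by
      have hinj : Set.InjOn (insert x) (B k0 : Set (Finset (Fin n))) := by
        intro a ha b hb hab
        have hxa : x ∉ a := hBx k0 a ha
        have hxb : x ∉ b := hBx k0 b hb
        have := congrArg (Finset.erase · x) hab
        simpa [Finset.erase_insert hxa, Finset.erase_insert hxb] using this
      have himg : ((B k0).image (insert x)).card = (B k0).card :=
        Finset.card_image_of_injOn hinj
      have hdisj : Disjoint (B k0) ((B k0).image (insert x)) := by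
        rw [Finset.disjoint_left]
        intro F hF hF'
        rcases Finset.mem_image.mp hF' with ⟨F', hF', rfl⟩
        exact hBx k0 _ hF (Finset.mem_insert_self x F')
      simp only [h𝓖, if_pos rfl]
      rw [Finset.card_union_of_disjoint hdisj, himg]; ring
    rw [← Finset.mul_prod_erase Finset.univ _ (Finset.mem_univ k0), hk0,
        ← Finset.mul_prod_erase Finset.univ _ (Finset.mem_univ k0), ← mul_assoc]
    congr 1
    refine Finset.prod_congr rfl fun k hk => ?_
    have : k ≠ k0 := Finset.ne_of_mem_erase hk
    simp [h𝓖, this]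
  calc 2 * ∏ k, (B k).card = ∏ k, (𝓖 k).card := hcard.symm
    _ ≤ sStar n ℓ m := by
        unfold sStar
        refine le_trans ?_ (Finset.le_sup (f := fun 𝓕' : Fin ℓ → Finset (Finset (Fin n)) =>
          if MOverlap n ℓ m 𝓕' then ∏ k, (𝓕' k).card else 0) (Finset.mem_univ 𝓖))
        exact le_of_eq (if_pos hov').symm

theorem keydeg {n ℓ : ℕ} (hℓ : 2 ≤ ℓ) (m : Fin ℓ → Fin ℓ → ℕ)
    (𝓕 : Fin ℓ → Finset (Finset (Fin n))) (hne : ∀ k, (𝓕 k).Nonempty)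
    (hov : MOverlap n ℓ m 𝓕) (hext : (∏ k, (𝓕 k).card) = sStar n ℓ m)
    (x : Fin n) (hbad : ∀ k, ndeg (𝓕 k) {x} < 1/3) :
    ∃ i j : Fin ℓ, i ≠ j ∧ 1/(4*((ℓ:ℝ)-1)) ≤ ndeg (𝓕 i) {x}
      ∧ 1/(4*((ℓ:ℝ)-1)) ≤ ndeg (𝓕 j) {x} := by
  classical
  set c : ℝ := 1/(4*((ℓ:ℝ)-1)) with hc
  have hℓ1 : (1:ℝ) ≤ (ℓ:ℝ) - 1 := by
    have : (2:ℝ) ≤ (ℓ:ℝ) := by exact_mod_cast hℓ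
    linarith
  have hcpos : 0 < c := by positivity
  have hc14 : c ≤ 1/4 := by
    rw [hc, div_le_div_iff₀ (by linarith) (by norm_num)]
    linarith
  set d : Fin ℓ → ℝ := fun k => ndeg (𝓕 k) {x} with hd
  have hcardpos : ∀ k, 0 < ((𝓕 k).card : ℝ) := fun k => by
    exact_mod_cast Finset.card_pos.mpr (hne k)
  have hdeq : ∀ k, d k = (((𝓕 k).filter (fun F => x ∈ F)).card : ℝ) / ((𝓕 k).card : ℝ) := by
    intro k
    simp [hd, ndeg, Finset.singleton_subset_iff]
  have hBeq : ∀ k, (((𝓕 k).filter (fun F => x ∉ F)).card : ℝ) = (1 - d k) * ((𝓕 k).card : ℝ) := by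
    intro k
    have hsum := Finset.card_filter_add_card_filter_not
      (s := 𝓕 k) (p := fun F => x ∈ F)
    have : (((𝓕 k).filter (fun F => x ∈ F)).card : ℝ)
        + (((𝓕 k).filter (fun F => ¬ x ∈ F)).card : ℝ) = ((𝓕 k).card : ℝ) := by
      exact_mod_cast hsum
    rw [hdeq k]
    field_simp
    linarith [this]
  -- from doubling and extremality
  have hdoub := doubling m 𝓕 hov x ⟨0, by omega⟩
  rw [← hext] at hdoub
  have hdoubR : (2:ℝ) * ∏ k, (((𝓕 k).filter (fun F => x ∉ F)).card : ℝ)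
      ≤ ∏ k, ((𝓕 k).card : ℝ) := by
    have := (Nat.cast_le (α := ℝ)).mpr hdoub
    push_cast at this
    convert this using 2 <;> simp
  have hprodd : ∏ k, (1 - d k) ≤ 1/2 := by
    have hrw : ∏ k, (((𝓕 k).filter (fun F => x ∉ F)).card : ℝ)
        = (∏ k, (1 - d k)) * ∏ k, ((𝓕 k).card : ℝ) := by
      rw [← Finset.prod_mul_distrib]
      exact Finset.prod_congr rfl fun k _ => hBeq k
    rw [hrw] at hdoubR
    have hPpos : 0 < ∏ k, ((𝓕 k).card : ℝ) := Finset.prod_pos fun k _ => hcardpos k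
    nlinarith [hdoubR, hPpos]
  by_contra hcon
  push_neg at hcon
  -- get k1 such that all k ≠ k1 have d k < c
  have hk1 : ∃ k1 : Fin ℓ, ∀ k, k ≠ k1 → d k < c := by
    by_cases hex : ∃ k1, c ≤ d k1
    · obtain ⟨k1, hk1⟩ := hex
      exact ⟨k1, fun k hk => hcon k1 k (Ne.symm hk) hk1⟩
    · push_neg at hex
      exact ⟨⟨0, by omega⟩, fun k _ => hex k⟩
  obtain ⟨k1, hk1⟩ := hk1
  -- lower bound on the product
  have hprod_split : ∏ k, (1 - d k)
      = (1 - d k1) * ∏ k ∈ Finset.univ.erase k1, (1 - d k) :=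
    (Finset.mul_prod_erase Finset.univ _ (Finset.mem_univ k1)).symm
  have hcard_erase : (Finset.univ.erase k1).card = ℓ - 1 := by
    rw [Finset.card_erase_of_mem (Finset.mem_univ k1)]
    simp
  have hlow1 : ∏ k ∈ Finset.univ.erase k1, (1 - c) ≤ ∏ k ∈ Finset.univ.erase k1, (1 - d k) := by
    refine Finset.prod_le_prod (fun k _ => by linarith) (fun k hk => ?_)
    have := hk1 k (Finset.ne_of_mem_erase hk)
    linarith
  have hconst : ∏ k ∈ Finset.univ.erase k1, (1 - c) = (1 - c)^(ℓ - 1) := by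
    rw [Finset.prod_const, hcard_erase]
  have hbern : (3:ℝ)/4 ≤ (1 - c)^(ℓ - 1) := by
    have h2 : (-2:ℝ) ≤ -c := by linarith
    have hb := one_add_mul_le_pow h2 (ℓ - 1)
    have hcast : ((ℓ - 1 : ℕ) : ℝ) = (ℓ:ℝ) - 1 := by
      have h1 : 1 ≤ ℓ := by omega
      push_cast [h1]
      ring
    rw [hcast] at hb
    have hcc : ((ℓ:ℝ) - 1) * c = 1/4 := by
      rw [hc]
      field_simp
    have h4 : ((ℓ:ℝ) - 1) * -c = -(1/4) := by linear_combination -hcc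
    rw [h4] at hb
    have h1c : ((1:ℝ) + -c) = 1 - c := by ring
    rw [h1c] at hb
    linarith
  have hdk1 : 1 - d k1 > 2/3 := by
    have := hbad k1
    simp only [hd] at this ⊢
    linarith
  have hfinal : 1/2 < ∏ k, (1 - d k) := by
    rw [hprod_split]
    have h1 : (3:ℝ)/4 ≤ ∏ k ∈ Finset.univ.erase k1, (1 - d k) := by
      calc (3:ℝ)/4 ≤ (1 - c)^(ℓ - 1) := hbern
        _ = ∏ k ∈ Finset.univ.erase k1, (1 - c) := hconst.symm
        _ ≤ _ := hlow1
    nlinarith [hdk1, h1]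
  linarith

/-- Proposition (most elements have large degree in some family): for fixed `ℓ ≥ 2` and a
fixed symmetric vector `m`, there is a constant `C > 0` such that for every `n ≥ 2` and every
extremal collection `𝓕 1, …, 𝓕 ℓ` of nonempty families with the `m`-overlapping property,
there is a set `I ⊆ [n]` with `|I| ≤ C·log₂ n` such that every `x ∈ [n] \ I` has
`d_k(x) ≥ 1/3` for some `k`. -/
theorem statement14 (ℓ : ℕ) (hℓ : 2 ≤ ℓ) (m : Fin ℓ → Fin ℓ → ℕ)
    (hsym : ∀ i j : Fin ℓ, m i j = m j i) :
    ∃ C : ℝ, 0 < C ∧ ∀ n : ℕ, 2 ≤ n →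
      ∀ 𝓕 : Fin ℓ → Finset (Finset (Fin n)),
        (∀ k, (𝓕 k).Nonempty) →
        MOverlap n ℓ m 𝓕 →
        (∏ k, (𝓕 k).card) = sStar n ℓ m →
        ∃ I : Finset (Fin n), (I.card : ℝ) ≤ C * Real.logb 2 n ∧
          ∀ x : Fin n, x ∉ I → ∃ k : Fin ℓ, (1 : ℝ) / 3 ≤ ndeg (𝓕 k) {x} := by
  classical
  set c : ℝ := 1/(4*((ℓ:ℝ)-1)) with hc
  have hℓ1 : (1:ℝ) ≤ (ℓ:ℝ) - 1 := by
    have : (2:ℝ) ≤ (ℓ:ℝ) := by exact_mod_cast hℓ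
    linarith
  have hcpos : 0 < c := by positivity
  set C : ℝ := (∑ i : Fin ℓ, ∑ j : Fin ℓ, (m i j : ℝ)) / c^2 + 1 with hC
  have hmnn : 0 ≤ (∑ i : Fin ℓ, ∑ j : Fin ℓ, (m i j : ℝ)) / c^2 := by positivity
  have hCpos : 0 < C := by
    rw [hC]
    have : (0:ℝ) ≤ ∑ i : Fin ℓ, ∑ j : Fin ℓ, (m i j : ℝ) := by positivity
    positivity
  refine ⟨C, hCpos, ?_⟩
  intro n hn 𝓕 hne hov hext
  set J : Finset (Fin n) := Finset.univ.filter
    (fun x : Fin n => ∀ k, ndeg (𝓕 k) {x} < 1/3) with hJ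
  refine ⟨J, ?_, ?_⟩
  · -- cardinality bound
    set Jp : Fin ℓ × Fin ℓ → Finset (Fin n) := fun p =>
      J.filter (fun x => c ≤ ndeg (𝓕 p.1) {x} ∧ c ≤ ndeg (𝓕 p.2) {x}) with hJp
    have hsubset : J ⊆ Finset.univ.offDiag.biUnion Jp := by
      intro x hx
      have hbad : ∀ k, ndeg (𝓕 k) {x} < 1/3 := (Finset.mem_filter.mp hx).2
      obtain ⟨i, j, hij, hi, hj⟩ := keydeg hℓ m 𝓕 hne hov hext x hbad
      refine Finset.mem_biUnion.mpr ⟨(i, j), ?_, ?_⟩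
      · exact Finset.mem_offDiag.mpr ⟨Finset.mem_univ _, Finset.mem_univ _, hij⟩
      · exact Finset.mem_filter.mpr ⟨hx, hi, hj⟩
    have hJcard : (J.card : ℝ) ≤ ∑ p ∈ Finset.univ.offDiag, ((Jp p).card : ℝ) := by
      have h1 : J.card ≤ (Finset.univ.offDiag.biUnion Jp).card := Finset.card_le_card hsubset
      have h2 := Finset.card_biUnion_le (s := Finset.univ.offDiag) (t := Jp)
      exact_mod_cast le_trans h1 h2
    -- per-pair bound
    have hpair : ∀ p ∈ Finset.univ.offDiag (α := Fin ℓ),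
        ((Jp p).card : ℝ) ≤ (m p.1 p.2 : ℝ) / c^2 := by
      rintro ⟨i, j⟩ hp
      have hij : i ≠ j := (Finset.mem_offDiag.mp hp).2.2
      have hcardpos : ∀ k, 0 < ((𝓕 k).card : ℝ) := fun k => by
        exact_mod_cast Finset.card_pos.mpr (hne k)
      have hcount := countL m 𝓕 hov hij
      have hcountR : ∑ x : Fin n,
          (((𝓕 i).filter (fun F => x ∈ F)).card : ℝ) * (((𝓕 j).filter (fun F => x ∈ F)).card : ℝ)
          ≤ (m i j : ℝ) * (((𝓕 i).card : ℝ) * ((𝓕 j).card : ℝ)) := by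
        exact_mod_cast hcount
      have hlow : ∀ x ∈ Jp (i, j),
          c * ((𝓕 i).card : ℝ) * (c * ((𝓕 j).card : ℝ))
          ≤ (((𝓕 i).filter (fun F => x ∈ F)).card : ℝ) * (((𝓕 j).filter (fun F => x ∈ F)).card : ℝ) := by
        intro x hx
        obtain ⟨-, hi, hj⟩ := Finset.mem_filter.mp hx
        have hdi : ndeg (𝓕 i) {x} = (((𝓕 i).filter (fun F => x ∈ F)).card : ℝ) / ((𝓕 i).card : ℝ) := by
          simp [ndeg, Finset.singleton_subset_iff]
        have hdj : ndeg (𝓕 j) {x} = (((𝓕 j).filter (fun F => x ∈ F)).card : ℝ) / ((𝓕 j).card : ℝ) := by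
          simp [ndeg, Finset.singleton_subset_iff]
        rw [hdi] at hi
        rw [hdj] at hj
        have h1 : c * ((𝓕 i).card : ℝ) ≤ (((𝓕 i).filter (fun F => x ∈ F)).card : ℝ) := by
          rw [le_div_iff₀ (hcardpos i)] at hi; linarith
        have h2 : c * ((𝓕 j).card : ℝ) ≤ (((𝓕 j).filter (fun F => x ∈ F)).card : ℝ) := by
          rw [le_div_iff₀ (hcardpos j)] at hj; linarith
        have hp1 : 0 ≤ c * ((𝓕 i).card : ℝ) := by positivity
        have hp2 : 0 ≤ c * ((𝓕 j).card : ℝ) := by positivity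
        exact mul_le_mul h1 h2 hp2 (le_trans hp1 h1)
      have hsum : ((Jp (i, j)).card : ℝ) * (c * ((𝓕 i).card : ℝ) * (c * ((𝓕 j).card : ℝ)))
          ≤ (m i j : ℝ) * (((𝓕 i).card : ℝ) * ((𝓕 j).card : ℝ)) := by
        calc ((Jp (i, j)).card : ℝ) * (c * ((𝓕 i).card : ℝ) * (c * ((𝓕 j).card : ℝ)))
            = ∑ _x ∈ Jp (i, j), c * ((𝓕 i).card : ℝ) * (c * ((𝓕 j).card : ℝ)) := by
              rw [Finset.sum_const]; ring
          _ ≤ ∑ x ∈ Jp (i, j),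
              (((𝓕 i).filter (fun F => x ∈ F)).card : ℝ) * (((𝓕 j).filter (fun F => x ∈ F)).card : ℝ) :=
              Finset.sum_le_sum hlow
          _ ≤ ∑ x : Fin n,
              (((𝓕 i).filter (fun F => x ∈ F)).card : ℝ) * (((𝓕 j).filter (fun F => x ∈ F)).card : ℝ) := by
              refine Finset.sum_le_sum_of_subset_of_nonneg (Finset.subset_univ _) ?_
              intro x _ _; positivity
          _ ≤ _ := hcountR
      -- divide
      rw [le_div_iff₀ (by positivity : (0:ℝ) < c^2)]
      have hFi := hcardpos i
      have hFj := hcardpos j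
      have hmul : (((Jp (i, j)).card : ℝ) * c^2) * (((𝓕 i).card : ℝ) * ((𝓕 j).card : ℝ))
          ≤ (m i j : ℝ) * (((𝓕 i).card : ℝ) * ((𝓕 j).card : ℝ)) := by
        calc (((Jp (i, j)).card : ℝ) * c^2) * (((𝓕 i).card : ℝ) * ((𝓕 j).card : ℝ))
            = ((Jp (i, j)).card : ℝ) * (c * ((𝓕 i).card : ℝ) * (c * ((𝓕 j).card : ℝ))) := by ring
          _ ≤ _ := hsum
      exact le_of_mul_le_mul_right hmul (by positivity)
    have hlog : (1:ℝ) ≤ Real.logb 2 n := by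
      rw [show (1:ℝ) = Real.logb 2 2 by simp]
      exact Real.logb_le_logb_of_le (by norm_num) (by norm_num) (by exact_mod_cast hn)
    calc (J.card : ℝ) ≤ ∑ p ∈ Finset.univ.offDiag, ((Jp p).card : ℝ) := hJcard
      _ ≤ ∑ p ∈ Finset.univ.offDiag, (m p.1 p.2 : ℝ) / c^2 := Finset.sum_le_sum hpair
      _ ≤ ∑ p ∈ Finset.univ ×ˢ Finset.univ, (m p.1 p.2 : ℝ) / c^2 := by
          refine Finset.sum_le_sum_of_subset_of_nonneg ?_ ?_
          · intro p hp
            simp [Finset.mem_product]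
          · intro p _ _; positivity
      _ = (∑ i : Fin ℓ, ∑ j : Fin ℓ, (m i j : ℝ)) / c^2 := by
          rw [Finset.sum_product, Finset.sum_div]
          refine Finset.sum_congr rfl fun i _ => ?_
          rw [Finset.sum_div]
      _ ≤ C := by rw [hC]; linarith
      _ = C * 1 := by ring
      _ ≤ C * Real.logb 2 n := by
          nlinarith [hlog, hCpos]
  · intro x hx
    have : ¬ (∀ k, ndeg (𝓕 k) {x} < 1/3) := by
      intro h
      exact hx (Finset.mem_filter.mpr ⟨Finset.mem_univ _, h⟩)
    push_neg at this
    obtain ⟨k, hk⟩ := this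
    exact ⟨k, hk⟩
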